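/- arXiv:1512.02503 — 7 statements merged into one kernel-verified Lean document; each statement's English description precedes it below -/
import Mathlib

section
/- In the commutative ring S = k[X1, X2, X3, X4]/(X3² - (X2² - X1²), X4² - (X2² - λ X1²)) over a field k, with λ = ε where ε² - ε + 1 = 0 and Δ ∈ k satisfies Δ² = 6ε - 3, the identity x4⁶ = (x2² + (ε-1)x1²)³ - (Δ x1 x2 x3)² holds, where xi denotes the image of Xi in S. -/
open MvPolynomial

theorem stmt_5 {k : Type*} [Field k] (ε Δ : k)
    (hε : ε ^ 2 - ε + 1 = 0) (hΔ : Δ ^ 2 = 6 * ε - 3)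
    (I : Ideal (MvPolynomial (Fin 4) k))
    (hI : I = Ideal.span {X 2 ^ 2 - (X 1 ^ 2 - X 0 ^ 2),
                          X 3 ^ 2 - (X 1 ^ 2 - C ε * X 0 ^ 2)})
    (x : Fin 4 → MvPolynomial (Fin 4) k ⧸ I)
    (hx : ∀ i, x i = Ideal.Quotient.mk I (X i)) :
    x 3 ^ 6 =
      (x 1 ^ 2 + algebraMap k _ (ε - 1) * x 0 ^ 2) ^ 3 -
        (algebraMap k _ Δ * x 0 * x 1 * x 2) ^ 2 := by
  have halg : ∀ c : k, algebraMap k (MvPolynomial (Fin 4) k ⧸ I) c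
      = Ideal.Quotient.mk I (C c) := fun c => rfl
  simp only [hx, halg, ← map_pow, ← map_mul, ← map_add, ← map_sub]
  rw [Ideal.Quotient.mk_eq_mk_iff_sub_mem, hI]
  rw [Ideal.span_insert, Ideal.mem_span_singleton_sup]
  refine ⟨C (6 * ε - 3) * X 0 ^ 2 * X 1 ^ 2, _,
    Ideal.mem_span_singleton.2 ⟨X 3 ^ 4 + X 3 ^ 2 * (X 1 ^ 2 - C ε * X 0 ^ 2)
      + (X 1 ^ 2 - C ε * X 0 ^ 2) ^ 2, rfl⟩, ?_⟩
  have hε' : C (σ := Fin 4) (R := k) ε ^ 2 - C ε + 1 = 0 := by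
    rw [← map_pow, ← map_one (C (σ := Fin 4) (R := k)), ← map_sub, ← map_add, hε, map_zero]
  have hΔ' : C (σ := Fin 4) (R := k) Δ ^ 2 = 6 * C ε - 3 := by
    rw [← map_pow, hΔ, map_sub]
    push_cast [map_mul, map_ofNat]
    ring
  simp only [map_sub, map_mul, map_one, map_ofNat]
  linear_combination ((2 * C (σ := Fin 4) ε - 1) * X 0 ^ 6) * hε'
    - (X 0 ^ 2 * X 1 ^ 2 * X 2 ^ 2) * hΔ'
end

section
/- In the commutative ring S = k[X1, X2, X3, X4]/(X3² - (X2² - X1²), X4² - (X2² - λ X1²)) over a field k with s ∈ k satisfying s² = 1 - λ, the identity (x2 x4)² - ((2-λ) - 2s)(x1 x3)² = (x2² - (1 - s)x1²)² holds, where xi denotes the image of Xi in S. -/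
open MvPolynomial

theorem stmt_8 {k : Type*} [Field k] (lam s : k) (hs : s ^ 2 = 1 - lam)
    (I : Ideal (MvPolynomial (Fin 4) k))
    (hI : I = Ideal.span {X 2 ^ 2 - (X 1 ^ 2 - X 0 ^ 2),
                          X 3 ^ 2 - (X 1 ^ 2 - C lam * X 0 ^ 2)})
    (x : Fin 4 → MvPolynomial (Fin 4) k ⧸ I)
    (hx : ∀ i, x i = Ideal.Quotient.mk I (X i)) :
    (x 1 * x 3) ^ 2 - algebraMap k _ ((2 - lam) - 2 * s) * (x 0 * x 2) ^ 2 =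
      (x 1 ^ 2 - algebraMap k _ (1 - s) * x 0 ^ 2) ^ 2 := by
  have hmk : ∀ c : k, (algebraMap k (MvPolynomial (Fin 4) k ⧸ I) c)
      = Ideal.Quotient.mk I (C c) := fun c => rfl
  simp only [hx, hmk, ← map_mul, ← map_pow, ← map_sub]
  rw [Ideal.Quotient.eq, hI]
  have h1 : (X 2 ^ 2 - (X 1 ^ 2 - X 0 ^ 2) : MvPolynomial (Fin 4) k) ∈
      Ideal.span {X 2 ^ 2 - (X 1 ^ 2 - X 0 ^ 2),
        X 3 ^ 2 - (X 1 ^ 2 - C lam * X 0 ^ 2)} := Ideal.subset_span (by simp)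
  have h2 : (X 3 ^ 2 - (X 1 ^ 2 - C lam * X 0 ^ 2) : MvPolynomial (Fin 4) k) ∈
      Ideal.span {X 2 ^ 2 - (X 1 ^ 2 - X 0 ^ 2),
        X 3 ^ 2 - (X 1 ^ 2 - C lam * X 0 ^ 2)} := Ideal.subset_span (by simp)
  have hs' : (C s : MvPolynomial (Fin 4) k) ^ 2 = 1 - C lam := by
    rw [← map_pow, hs, map_sub, map_one]
  have key : ((X 1 * X 3) ^ 2 - C (2 - lam - 2 * s) * (X 0 * X 2) ^ 2
        - (X 1 ^ 2 - C (1 - s) * X 0 ^ 2) ^ 2 : MvPolynomial (Fin 4) k)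
      = X 1 ^ 2 * (X 3 ^ 2 - (X 1 ^ 2 - C lam * X 0 ^ 2))
        - C (2 - lam - 2 * s) * X 0 ^ 2 * (X 2 ^ 2 - (X 1 ^ 2 - X 0 ^ 2)) := by
    have := hs'
    simp only [map_sub, map_mul, map_one, map_ofNat] at *
    linear_combination -(X 0 : MvPolynomial (Fin 4) k) ^ 4 * this
  rw [key]
  exact Ideal.sub_mem _ (Ideal.mul_mem_left _ _ h2) (Ideal.mul_mem_left _ _ h1)
end

section
/- Let L(p) be the string group on generators x1, ..., xt with relations p1·x1 = ... = pt·xt = c (each pi ≥ 2). Then every element x of L(p) can be written uniquely as x = l·c + Σ li·xi with l ∈ ℤ and 0 ≤ li ≤ pi - 1 for each i. -/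
/-- Relations subgroup for the string group of weight type `p`:
generated by the elements `p i • x i - p 0 • x 0`. -/
noncomputable def stringRels (t : ℕ) (p : Fin (t + 1) → ℕ) :
    AddSubgroup (Fin (t + 1) →₀ ℤ) :=
  AddSubgroup.closure (Set.range fun i : Fin (t + 1) =>
    Finsupp.single i (p i : ℤ) - Finsupp.single 0 (p 0 : ℤ))

/-- The string group `L(p)`. -/
abbrev StringGroup (t : ℕ) (p : Fin (t + 1) → ℕ) :=
  (Fin (t + 1) →₀ ℤ) ⧸ stringRels t p

/-- The generator `x_i` of the string group. -/
noncomputable def gen (t : ℕ) (p : Fin (t + 1) → ℕ) (i : Fin (t + 1)) :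
    StringGroup t p :=
  QuotientAddGroup.mk (Finsupp.single i 1)

/-- The canonical element `c = p_i • x_i` of the string group. -/
noncomputable def can (t : ℕ) (p : Fin (t + 1) → ℕ) : StringGroup t p :=
  (p 0 : ℤ) • gen t p 0

namespace StringAux

variable (t : ℕ) (p : Fin (t + 1) → ℕ)

lemma rel_mem (i : Fin (t + 1)) :
    Finsupp.single i (p i : ℤ) - Finsupp.single 0 (p 0 : ℤ) ∈ stringRels t p :=
  AddSubgroup.subset_closure ⟨i, rfl⟩

lemma mk_single (i : Fin (t + 1)) (z : ℤ) :
    (QuotientAddGroup.mk (Finsupp.single i z) : StringGroup t p) = z • gen t p i := by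
  rw [gen, ← QuotientAddGroup.mk_zsmul, Finsupp.smul_single', mul_one]

lemma pc_gen (i : Fin (t + 1)) : (p i : ℤ) • gen t p i = can t p := by
  rw [can, ← mk_single, ← mk_single]
  rw [QuotientAddGroup.eq]
  have := (stringRels t p).neg_mem (rel_mem t p i)
  simpa [neg_sub, sub_eq_neg_add] using this

/-- First component hom: `f ↦ ∑ i, f i / p i` in `ℚ`. -/
noncomputable def phi1 : (Fin (t + 1) →₀ ℤ) →+ ℚ :=
  Finsupp.liftAddHom fun i => (AddMonoidHom.mulRight ((p i : ℚ)⁻¹)).comp (Int.castAddHom ℚ)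

/-- Second component hom: `f ↦ (f i mod p i)ᵢ`. -/
noncomputable def phi2 : (Fin (t + 1) →₀ ℤ) →+ (∀ i, ZMod (p i)) :=
  Finsupp.liftAddHom fun i =>
    (AddMonoidHom.single (fun i => ZMod (p i)) i).comp (Int.castAddHom (ZMod (p i)))

noncomputable def phi : (Fin (t + 1) →₀ ℤ) →+ ℚ × (∀ i, ZMod (p i)) :=
  (phi1 t p).prod (phi2 t p)

@[simp] lemma phi1_single (i : Fin (t + 1)) (z : ℤ) :
    phi1 t p (Finsupp.single i z) = (z : ℚ) * (p i : ℚ)⁻¹ := by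
  simp [phi1]

@[simp] lemma phi2_single (i : Fin (t + 1)) (z : ℤ) :
    phi2 t p (Finsupp.single i z) = Pi.single i ((z : ZMod (p i))) := by
  simp [phi2, AddMonoidHom.single]
  rfl

lemma pQ_ne (hp : ∀ i, 2 ≤ p i) (i : Fin (t + 1)) : (p i : ℚ) ≠ 0 := by
  have : 0 < p i := lt_of_lt_of_le (by norm_num) (hp i)
  exact_mod_cast this.ne'

lemma phi_rels (hp : ∀ i, 2 ≤ p i) : stringRels t p ≤ (phi t p).ker := by
  rw [stringRels, AddSubgroup.closure_le]
  rintro _ ⟨i, rfl⟩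
  simp only [SetLike.mem_coe, AddMonoidHom.mem_ker, map_sub, phi, AddMonoidHom.prod_apply,
    phi1_single, phi2_single, Prod.mk_sub_mk, Prod.mk_eq_zero]
  constructor
  · rw [Int.cast_natCast, Int.cast_natCast, mul_inv_cancel₀ (pQ_ne t p hp i),
      mul_inv_cancel₀ (pQ_ne t p hp 0), sub_self]
  · simp [ZMod.natCast_self]

noncomputable def psi (hp : ∀ i, 2 ≤ p i) : StringGroup t p →+ ℚ × (∀ i, ZMod (p i)) :=
  QuotientAddGroup.lift _ (phi t p) (phi_rels t p hp)

lemma psi_gen (hp : ∀ i, 2 ≤ p i) (i : Fin (t + 1)) :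
    psi t p hp (gen t p i) = ((p i : ℚ)⁻¹, Pi.single i (1 : ZMod (p i))) := by
  simp [psi, gen, phi]

lemma psi_can (hp : ∀ i, 2 ≤ p i) : psi t p hp (can t p) = (1, 0) := by
  rw [can, map_zsmul, psi_gen]
  refine Prod.ext ?_ ?_
  · show (p 0 : ℤ) • ((p 0 : ℚ)⁻¹) = 1
    rw [zsmul_eq_mul, Int.cast_natCast]
    exact mul_inv_cancel₀ (pQ_ne t p hp 0)
  · show (p 0 : ℤ) • (Pi.single (0 : Fin (t + 1)) (1 : ZMod (p 0)) : ∀ i, ZMod (p i)) = 0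
    rw [← Pi.single_smul]
    simp [ZMod.natCast_self]

lemma psi_normal (hp : ∀ i, 2 ≤ p i) (l : ℤ) (ls : Fin (t + 1) → ℤ) :
    psi t p hp (l • can t p + ∑ i, ls i • gen t p i)
      = ((l : ℚ) + ∑ i, (ls i : ℚ) * (p i : ℚ)⁻¹, fun j => ((ls j : ZMod (p j)))) := by
  rw [map_add, map_zsmul, psi_can t p hp, map_sum]
  simp only [map_zsmul, psi_gen]
  refine Prod.ext ?_ ?_
  · show (l • ((1:ℚ), (0 : ∀ i, ZMod (p i)))).1
        + (∑ i, ls i • ((p i : ℚ)⁻¹, Pi.single i (1 : ZMod (p i)))).1 = _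
    rw [Prod.fst_sum]
    simp [zsmul_eq_mul]
  · show (l • ((1:ℚ), (0 : ∀ i, ZMod (p i)))).2
        + (∑ i, ls i • ((p i : ℚ)⁻¹, Pi.single i (1 : ZMod (p i)))).2 = _
    rw [Prod.snd_sum]
    have hterm : ∀ i : Fin (t + 1),
        (ls i • ((p i : ℚ)⁻¹, (Pi.single i (1 : ZMod (p i)) : ∀ j, ZMod (p j)))).2
          = (Pi.single i ((ls i : ZMod (p i))) : ∀ j, ZMod (p j)) := by
      intro i
      show ls i • (Pi.single i (1 : ZMod (p i)) : ∀ j, ZMod (p j)) = _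
      rw [← Pi.single_smul]
      simp
    rw [Finset.sum_congr rfl fun i _ => hterm i,
      Finset.univ_sum_single (fun j => ((ls j : ZMod (p j))))]
    show l • (0 : ∀ i, ZMod (p i)) + _ = _
    rw [smul_zero, zero_add]

end StringAux

theorem stmt_10 (t : ℕ) (p : Fin (t + 1) → ℕ) (hp : ∀ i, 2 ≤ p i)
    (x : StringGroup t p) :
    ∃! lf : ℤ × (Fin (t + 1) → ℤ),
      (∀ i, 0 ≤ lf.2 i ∧ lf.2 i ≤ (p i : ℤ) - 1) ∧
      x = lf.1 • can t p + ∑ i, lf.2 i • gen t p i := by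
  have hppos : ∀ i, (0:ℤ) < (p i : ℤ) := by
    intro i
    exact_mod_cast Nat.lt_of_lt_of_le Nat.zero_lt_two (hp i)
  obtain ⟨f, rfl⟩ := QuotientAddGroup.mk_surjective x
  set L : ℤ := ∑ i, f i / (p i : ℤ) with hL
  set Ls : Fin (t + 1) → ℤ := fun i => f i % (p i : ℤ) with hLs
  have hex : (QuotientAddGroup.mk f : StringGroup t p)
      = L • can t p + ∑ i, Ls i • gen t p i := by
    conv_lhs => rw [← Finsupp.univ_sum_single f]
    rw [show (QuotientAddGroup.mk (∑ i, Finsupp.single i (f i)) : StringGroup t p)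
        = ∑ i, (QuotientAddGroup.mk (Finsupp.single i (f i)) : StringGroup t p) from
      map_sum (QuotientAddGroup.mk' (stringRels t p)) _ _]
    simp only [StringAux.mk_single]
    have hterm : ∀ i : Fin (t + 1), f i • gen t p i
        = (f i / (p i : ℤ)) • can t p + Ls i • gen t p i := by
      intro i
      rw [← StringAux.pc_gen t p i, ← mul_zsmul, ← add_zsmul]
      congr 1
      show f i = f i / (p i : ℤ) * (p i : ℤ) + f i % (p i : ℤ)
      rw [mul_comm]
      exact (Int.mul_ediv_add_emod (f i) (p i : ℤ)).symm
    rw [Finset.sum_congr rfl fun i _ => hterm i, Finset.sum_add_distrib]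
    congr 1
    exact (map_sum (zmultiplesHom _ (can t p)) (fun i => f i / (p i : ℤ)) Finset.univ).symm
  have hbL : ∀ i, 0 ≤ Ls i ∧ Ls i ≤ (p i : ℤ) - 1 := by
    intro i
    have h1 : 0 ≤ f i % (p i : ℤ) := Int.emod_nonneg _ (hppos i).ne'
    have h2 : f i % (p i : ℤ) < (p i : ℤ) := Int.emod_lt_of_pos (f i) (hppos i)
    refine ⟨h1, ?_⟩
    show f i % (p i : ℤ) ≤ (p i : ℤ) - 1
    omega
  refine ⟨(L, Ls), ⟨hbL, hex⟩, ?_⟩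
  rintro ⟨l, ls⟩ ⟨hbound, heq⟩
  have hpsi : StringAux.psi t p hp (l • can t p + ∑ i, ls i • gen t p i)
      = StringAux.psi t p hp (L • can t p + ∑ i, Ls i • gen t p i) := by
    rw [← heq, ← hex]
  rw [StringAux.psi_normal t p hp, StringAux.psi_normal t p hp, Prod.mk.injEq] at hpsi
  have hls : ls = Ls := by
    funext j
    have h2 := congrFun hpsi.2 j
    have hmod : ls j % (p j : ℤ) = Ls j % (p j : ℤ) :=
      (ZMod.intCast_eq_intCast_iff _ _ _).mp h2
    have b1 := hbound j
    have b2 := hbL j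
    rw [Int.emod_eq_of_lt b1.1 (by omega), Int.emod_eq_of_lt b2.1 (by omega)] at hmod
    exact hmod
  have hl : l = L := by
    have h1 := hpsi.1
    rw [hls] at h1
    have : (l : ℚ) = (L : ℚ) := by
      exact add_right_cancel h1
    exact_mod_cast this
  rw [Prod.mk.injEq]
  exact ⟨hl, hls⟩
end

section
/- In the string group L(2,2,2,2) with generators x1, x2, x3, x4 and relations 2x1 = 2x2 = 2x3 = 2x4 = c, the dualizing element ω = 2c - x1 - x2 - x3 - x4 has order exactly 2. -/
/-- Coordinate-1 mod 2 map. -/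
noncomputable def phi13 : (Fin 4 →₀ ℤ) →+ ZMod 2 :=
  (Int.castAddHom (ZMod 2)).comp (Finsupp.applyAddHom (1 : Fin 4))

lemma rels_le_ker13 : stringRels 3 ![2, 2, 2, 2] ≤ phi13.ker := by
  rw [stringRels, AddSubgroup.closure_le]
  rintro _ ⟨i, rfl⟩
  fin_cases i <;>
    · simp [phi13, AddMonoidHom.mem_ker, Finsupp.single_apply]
      try decide

noncomputable def psi13 : StringGroup 3 ![2, 2, 2, 2] →+ ZMod 2 :=
  QuotientAddGroup.lift _ phi13 rels_le_ker13

theorem stmt_13 :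
    addOrderOf ((2 : ℤ) • can 3 ![2, 2, 2, 2] -
      gen 3 ![2, 2, 2, 2] 0 - gen 3 ![2, 2, 2, 2] 1 -
      gen 3 ![2, 2, 2, 2] 2 - gen 3 ![2, 2, 2, 2] 3) = 2 := by
  have hω : ((2 : ℤ) • can 3 ![2, 2, 2, 2] -
      gen 3 ![2, 2, 2, 2] 0 - gen 3 ![2, 2, 2, 2] 1 -
      gen 3 ![2, 2, 2, 2] 2 - gen 3 ![2, 2, 2, 2] 3) =
      QuotientAddGroup.mk ((2 : ℤ) • ((2 : ℤ) • Finsupp.single 0 1) -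
        Finsupp.single 0 1 - Finsupp.single 1 1 -
        Finsupp.single 2 1 - Finsupp.single 3 1) := by
    simp [can, gen, ← QuotientAddGroup.mk_zsmul, ← QuotientAddGroup.mk_sub]
  rw [hω]
  apply addOrderOf_eq_prime
  · rw [← QuotientAddGroup.mk_nsmul, QuotientAddGroup.eq_zero_iff]
    have h : ∀ i : Fin 4,
        (Finsupp.single i ((![2, 2, 2, 2] i : ℕ) : ℤ) -
          Finsupp.single 0 ((![2, 2, 2, 2] 0 : ℕ) : ℤ)) ∈
          stringRels 3 ![2, 2, 2, 2] :=
      fun i => AddSubgroup.subset_closure ⟨i, rfl⟩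
    have key : (2 : ℕ) • ((2 : ℤ) • ((2 : ℤ) • Finsupp.single (0 : Fin 4) (1 : ℤ)) -
        Finsupp.single 0 1 - Finsupp.single 1 1 -
        Finsupp.single 2 1 - Finsupp.single 3 1) =
        -(Finsupp.single 1 ((![2, 2, 2, 2] 1 : ℕ) : ℤ) -
            Finsupp.single 0 ((![2, 2, 2, 2] 0 : ℕ) : ℤ)) -
          (Finsupp.single 2 ((![2, 2, 2, 2] 2 : ℕ) : ℤ) -
            Finsupp.single 0 ((![2, 2, 2, 2] 0 : ℕ) : ℤ)) -
          (Finsupp.single 3 ((![2, 2, 2, 2] 3 : ℕ) : ℤ) -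
            Finsupp.single 0 ((![2, 2, 2, 2] 0 : ℕ) : ℤ)) := by
      ext j
      fin_cases j <;> simp [Finsupp.single_apply]
    rw [key]
    exact sub_mem (sub_mem (neg_mem (h 1)) (h 2)) (h 3)
  · intro hzero
    have := congrArg psi13 hzero
    simp [psi13, phi13, QuotientAddGroup.lift_mk, Finsupp.single_apply] at this
end

section
/- There is a well-defined group homomorphism π : L(4,4,2) → L(2,2,2,2) with π(z1) = x1, π(z2) = x2, π(z3) = x3 + x4, and its kernel is the cyclic group of order 2 generated by 2z1 + 2z2 - c. -/
noncomputable def gmap : Fin 3 → (Fin 4 →₀ ℤ) :=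
  ![Finsupp.single 0 1, Finsupp.single 1 1, Finsupp.single 2 1 + Finsupp.single 3 1]

noncomputable def fhom : (Fin 3 →₀ ℤ) →+ (Fin 4 →₀ ℤ) :=
  (Finsupp.lsum ℤ fun i => LinearMap.toSpanSingleton ℤ _ (gmap i)).toAddMonoidHom

lemma fhom_single (i : Fin 3) (n : ℤ) : fhom (Finsupp.single i n) = n • gmap i := by
  simp [fhom]

lemma decomp3 (v : Fin 3 →₀ ℤ) :
    v = Finsupp.single 0 (v 0) + Finsupp.single 1 (v 1) + Finsupp.single 2 (v 2) := by
  ext j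
  fin_cases j <;> simp [Finsupp.single_apply]

lemma mem_rels3 (i : Fin 4) (hi : i ≠ 0) :
    Finsupp.single i (2:ℤ) - Finsupp.single 0 2 ∈ stringRels 3 ![2,2,2,2] := by
  apply AddSubgroup.subset_closure
  refine ⟨i, ?_⟩
  fin_cases i <;> simp_all

lemma mem_rels2_2 :
    Finsupp.single (2:Fin 3) (2:ℤ) - Finsupp.single 0 4 ∈ stringRels 2 ![4,4,2] := by
  apply AddSubgroup.subset_closure
  exact ⟨2, by norm_num; rfl⟩

lemma mem_rels2_1 :
    Finsupp.single (1:Fin 3) (4:ℤ) - Finsupp.single 0 4 ∈ stringRels 2 ![4,4,2] := by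
  apply AddSubgroup.subset_closure
  exact ⟨1, by norm_num⟩

lemma fhom_rels : stringRels 2 ![4,4,2] ≤
    AddMonoidHom.ker ((QuotientAddGroup.mk' (stringRels 3 ![2,2,2,2])).comp fhom) := by
  rw [stringRels, AddSubgroup.closure_le]
  rintro _ ⟨i, rfl⟩
  simp only [SetLike.mem_coe, AddMonoidHom.mem_ker, AddMonoidHom.comp_apply,
    map_sub, QuotientAddGroup.mk'_apply]
  rw [fhom_single, fhom_single]
  rw [← QuotientAddGroup.mk_sub, QuotientAddGroup.eq_zero_iff]
  fin_cases i
  · simpa using (stringRels 3 ![2,2,2,2]).zero_mem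
  · have M := AddSubgroup.zsmul_mem (stringRels 3 ![2,2,2,2]) (mem_rels3 1 (by decide)) 2
    have e : (2:ℤ) • (Finsupp.single (1:Fin 4) (2:ℤ) - Finsupp.single 0 2) =
        ((![4,4,2] (1:Fin 3) : ℕ) : ℤ) • gmap 1 - ((![4,4,2] (0:Fin 3) : ℕ) : ℤ) • gmap 0 := by
      ext j; fin_cases j <;> simp [gmap, Finsupp.single_apply]
    exact e ▸ M
  · have M := AddSubgroup.add_mem (stringRels 3 ![2,2,2,2])
      (mem_rels3 2 (by decide)) (mem_rels3 3 (by decide))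
    have e : (Finsupp.single (2:Fin 4) (2:ℤ) - Finsupp.single 0 2) +
        (Finsupp.single (3:Fin 4) (2:ℤ) - Finsupp.single 0 2) =
        ((![4,4,2] (2:Fin 3) : ℕ) : ℤ) • gmap 2 - ((![4,4,2] (0:Fin 3) : ℕ) : ℤ) • gmap 0 := by
      ext j; fin_cases j <;> simp [gmap, Finsupp.single_apply]
    exact e ▸ M

noncomputable def piHom : StringGroup 2 ![4,4,2] →+ StringGroup 3 ![2,2,2,2] :=
  QuotientAddGroup.lift _ ((QuotientAddGroup.mk' (stringRels 3 ![2,2,2,2])).comp fhom) fhom_rels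

lemma piHom_mk (v : Fin 3 →₀ ℤ) :
    piHom (QuotientAddGroup.mk v) = QuotientAddGroup.mk (fhom v) := rfl

-- test homs on the Fin 4 side
noncomputable def sig : (Fin 4 →₀ ℤ) →+ ℤ :=
  (Finsupp.lsum ℤ fun _ => (LinearMap.id : ℤ →ₗ[ℤ] ℤ)).toAddMonoidHom

noncomputable def tau (i : Fin 4) : (Fin 4 →₀ ℤ) →+ ZMod 2 :=
  (Int.castAddHom (ZMod 2)).comp (Finsupp.applyAddHom i)

lemma sig_single (i : Fin 4) (n : ℤ) : sig (Finsupp.single i n) = n := by simp [sig]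

lemma rels3_le_sig : stringRels 3 ![2,2,2,2] ≤ AddMonoidHom.ker sig := by
  rw [stringRels, AddSubgroup.closure_le]
  rintro _ ⟨i, rfl⟩
  simp only [SetLike.mem_coe, AddMonoidHom.mem_ker, map_sub]
  fin_cases i <;> simp [sig_single]

lemma rels3_le_tau (i : Fin 4) (hi : i ≠ 0) :
    stringRels 3 ![2,2,2,2] ≤ AddMonoidHom.ker (tau i) := by
  rw [stringRels, AddSubgroup.closure_le]
  rintro _ ⟨j, rfl⟩
  simp only [SetLike.mem_coe, AddMonoidHom.mem_ker, map_sub, tau,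
    AddMonoidHom.comp_apply, Finsupp.applyAddHom_apply]
  fin_cases i <;> fin_cases j <;>
    simp_all [Finsupp.single_apply] <;> decide

-- test hom on Fin 3 side
noncomputable def psi : (Fin 3 →₀ ℤ) →+ ZMod 4 :=
  (Int.castAddHom (ZMod 4)).comp (Finsupp.applyAddHom 1)

lemma rels2_le_psi : stringRels 2 ![4,4,2] ≤ AddMonoidHom.ker psi := by
  rw [stringRels, AddSubgroup.closure_le]
  rintro _ ⟨j, rfl⟩
  simp only [SetLike.mem_coe, AddMonoidHom.mem_ker, map_sub, psi,
    AddMonoidHom.comp_apply, Finsupp.applyAddHom_apply]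
  fin_cases j <;> simp [Finsupp.single_apply] <;> decide

lemma mk_zsmul' (v : Fin 3 →₀ ℤ) (n : ℤ) :
    (n • (QuotientAddGroup.mk v : StringGroup 2 ![4,4,2])) = QuotientAddGroup.mk (n • v) :=
  (map_zsmul (QuotientAddGroup.mk' (stringRels 2 ![4,4,2])) n v).symm

lemma fhom_comp_sig (v : Fin 3 →₀ ℤ) : sig (fhom v) = v 0 + v 1 + 2 * v 2 := by
  conv_lhs => rw [decomp3 v]
  simp only [map_add, fhom_single]
  simp [gmap, sig_single, smul_add]
  ring

lemma fhom_comp_tau1 (v : Fin 3 →₀ ℤ) : tau 1 (fhom v) = (v 1 : ZMod 2) := by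
  conv_lhs => rw [decomp3 v]
  simp only [map_add, fhom_single]
  simp [gmap, tau, Finsupp.single_apply]

lemma fhom_comp_tau2 (v : Fin 3 →₀ ℤ) : tau 2 (fhom v) = (v 2 : ZMod 2) := by
  conv_lhs => rw [decomp3 v]
  simp only [map_add, fhom_single]
  simp [gmap, tau, Finsupp.single_apply]

lemma k_eq : (2:ℤ) • gen 2 ![4,4,2] 0 + (2:ℤ) • gen 2 ![4,4,2] 1 - can 2 ![4,4,2]
    = QuotientAddGroup.mk (Finsupp.single 1 2 - Finsupp.single 0 2) := by
  rw [can, gen, gen, mk_zsmul', mk_zsmul', mk_zsmul', ← QuotientAddGroup.mk_add,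
    ← QuotientAddGroup.mk_sub]
  congr 1
  ext j
  fin_cases j <;> simp [Finsupp.single_apply]

theorem stmt_14 :
    ∃ π : StringGroup 2 ![4, 4, 2] →+ StringGroup 3 ![2, 2, 2, 2],
      π (gen 2 ![4, 4, 2] 0) = gen 3 ![2, 2, 2, 2] 0 ∧
      π (gen 2 ![4, 4, 2] 1) = gen 3 ![2, 2, 2, 2] 1 ∧
      π (gen 2 ![4, 4, 2] 2) = gen 3 ![2, 2, 2, 2] 2 + gen 3 ![2, 2, 2, 2] 3 ∧
      π.ker = AddSubgroup.zmultiples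
        ((2 : ℤ) • gen 2 ![4, 4, 2] 0 + (2 : ℤ) • gen 2 ![4, 4, 2] 1 - can 2 ![4, 4, 2]) ∧
      addOrderOf
        ((2 : ℤ) • gen 2 ![4, 4, 2] 0 + (2 : ℤ) • gen 2 ![4, 4, 2] 1 - can 2 ![4, 4, 2]) = 2 := by
  set u : Fin 3 →₀ ℤ := Finsupp.single 1 2 - Finsupp.single 0 2 with hu
  have hfu : fhom u = Finsupp.single 1 2 - Finsupp.single 0 2 := by
    rw [hu, map_sub, fhom_single, fhom_single]
    ext j; fin_cases j <;> simp [gmap, Finsupp.single_apply]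
  have hku : piHom (QuotientAddGroup.mk u) = 0 := by
    rw [piHom_mk, QuotientAddGroup.eq_zero_iff, hfu]
    exact mem_rels3 1 (by decide)
  refine ⟨piHom, ?_, ?_, ?_, ?_, ?_⟩
  · rw [gen, piHom_mk, gen]
    congr 1
    rw [fhom_single]
    simp [gmap]
  · rw [gen, piHom_mk, gen]
    congr 1
    rw [fhom_single]
    simp [gmap]
  · rw [gen, piHom_mk, gen, gen, ← QuotientAddGroup.mk_add]
    congr 1
    rw [fhom_single]
    simp [gmap]
  · rw [k_eq]
    ext x
    simp only [AddMonoidHom.mem_ker, AddSubgroup.mem_zmultiples_iff]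
    constructor
    · intro hx
      obtain ⟨v, rfl⟩ := QuotientAddGroup.mk_surjective x
      rw [piHom_mk] at hx
      replace hx : fhom v ∈ stringRels 3 ![2,2,2,2] := (QuotientAddGroup.eq_zero_iff _).mp hx
      have h1 : v 0 + v 1 + 2 * v 2 = 0 := by
        have := rels3_le_sig hx
        rwa [AddMonoidHom.mem_ker, fhom_comp_sig] at this
      have h2 : (2:ℤ) ∣ v 1 := by
        have := rels3_le_tau 1 (by decide) hx
        rw [AddMonoidHom.mem_ker, fhom_comp_tau1] at this
        exact_mod_cast (ZMod.intCast_zmod_eq_zero_iff_dvd _ 2).mp this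
      have h3 : (2:ℤ) ∣ v 2 := by
        have := rels3_le_tau 2 (by decide) hx
        rw [AddMonoidHom.mem_ker, fhom_comp_tau2] at this
        exact_mod_cast (ZMod.intCast_zmod_eq_zero_iff_dvd _ 2).mp this
      obtain ⟨m, hm⟩ := h2
      obtain ⟨n, hn⟩ := h3
      refine ⟨m, ?_⟩
      have hv : v = m • u + n • (Finsupp.single 2 2 - Finsupp.single 0 4) := by
        ext j
        fin_cases j <;>
          simp [hu, Finsupp.single_apply, smul_eq_mul] <;> omega
      rw [hv, QuotientAddGroup.mk_add, ← mk_zsmul', ← mk_zsmul']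
      have h0 : (QuotientAddGroup.mk (Finsupp.single 2 2 - Finsupp.single 0 4) :
          StringGroup 2 ![4,4,2]) = 0 := (QuotientAddGroup.eq_zero_iff _).mpr mem_rels2_2
      rw [h0, smul_zero, add_zero]
    · rintro ⟨m, rfl⟩
      rw [map_zsmul, hku, smul_zero]
  · rw [k_eq]
    refine addOrderOf_eq_prime ?_ ?_
    · rw [two_nsmul, ← QuotientAddGroup.mk_add]
      rw [QuotientAddGroup.eq_zero_iff]
      have e : u + u = Finsupp.single 1 4 - Finsupp.single 0 4 := by
        ext j; fin_cases j <;> simp [hu, Finsupp.single_apply]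
      rw [e]
      exact mem_rels2_1
    · intro h
      have hmem := rels2_le_psi ((QuotientAddGroup.eq_zero_iff _).mp h)
      rw [AddMonoidHom.mem_ker] at hmem
      have : psi u = 2 := by simp [psi, hu, Finsupp.single_apply]
      rw [this] at hmem
      exact absurd hmem (by decide)
end

section
/- The group endomorphism π of L(2,2,2,2) determined by π(x1) = x1 + x3, π(x2) = x2 + x4, π(x3) = π(x4) = c is well defined, and its kernel is the cyclic group of order 2 generated by x3 - x4. -/
namespace Stmt17

abbrev p4 : Fin 4 → ℕ := ![2,2,2,2]
abbrev F : Type := Fin 4 →₀ ℤ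
abbrev L : Type := StringGroup 3 p4
abbrev T : Type := ℤ × ZMod 2 × ZMod 2 × ZMod 2
noncomputable abbrev R : AddSubgroup F := stringRels 3 p4

noncomputable def mkL : F →+ L := QuotientAddGroup.mk' R

lemma rel_mem (i : Fin 4) : Finsupp.single i 2 - Finsupp.single 0 2 ∈ R := by
  have hp : ∀ j : Fin 4, (p4 j : ℤ) = 2 := by decide
  have := AddSubgroup.subset_closure (G := F)
    (k := Set.range fun j : Fin 4 =>
      Finsupp.single j (p4 j : ℤ) - Finsupp.single 0 (p4 0 : ℤ))
    (Set.mem_range_self i)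
  rwa [hp i, hp 0] at this

lemma mkL_rel (i : Fin 4) : mkL (Finsupp.single i 2 - Finsupp.single 0 2) = 0 :=
  (QuotientAddGroup.eq_zero_iff _).mpr (rel_mem i)

lemma gen_eq (i : Fin 4) : gen 3 p4 i = mkL (Finsupp.single i 1) := rfl

lemma two_smul_gen (i : Fin 4) :
    (2 : ℤ) • gen 3 p4 i - (2 : ℤ) • gen 3 p4 0 = 0 := by
  rw [gen_eq, gen_eq, ← map_zsmul, ← map_zsmul, ← map_sub, Finsupp.smul_single,
    Finsupp.smul_single]
  simpa using mkL_rel i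

/-- target values of the lift on F -/
noncomputable def w : Fin 4 → F :=
  ![Finsupp.single 0 1 + Finsupp.single 2 1,
    Finsupp.single 1 1 + Finsupp.single 3 1,
    Finsupp.single 0 2, Finsupp.single 0 2]

noncomputable def φ : F →+ F := Finsupp.liftAddHom fun i => zmultiplesHom F (w i)

lemma φ_single (i : Fin 4) (n : ℤ) : φ (Finsupp.single i n) = n • w i := by
  simp [φ, Finsupp.liftAddHom_apply_single]

/-- values of α on generators -/
def v : Fin 4 → T := ![(1,0,0,0), (1,1,0,0), (1,0,1,0), (1,0,0,1)]

noncomputable def α : F →+ T := Finsupp.liftAddHom fun i => zmultiplesHom T (v i)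

lemma α_single (i : Fin 4) (n : ℤ) : α (Finsupp.single i n) = n • v i := by
  simp [α, Finsupp.liftAddHom_apply_single]

lemma α_rel (i : Fin 4) : α (Finsupp.single i 2 - Finsupp.single 0 2) = 0 := by
  fin_cases i <;> rw [map_sub, α_single, α_single] <;> decide

lemma hα : R ≤ α.ker := by
  show stringRels 3 p4 ≤ _
  unfold stringRels
  rw [AddSubgroup.closure_le]
  rintro _ ⟨i, rfl⟩
  have hp : ∀ j : Fin 4, (p4 j : ℤ) = 2 := by decide
  show α ((fun₀ | i => ((p4 i : ℤ))) - fun₀ | 0 => ((p4 0 : ℤ))) = 0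
  rw [hp i, hp 0]
  exact α_rel i

noncomputable def αbar : L →+ T := QuotientAddGroup.lift R α hα

lemma αbar_mk (f : F) : αbar (mkL f) = α f := rfl
lemma lift_one {A : Type} [AddCommGroup A] (f : {f : ℤ →+ A // f 2 = 0}) :
    ZMod.lift 2 f (1 : ZMod 2) = f.1 1 := by
  have h : ((1:ℤ) : ZMod 2) = 1 := by decide
  rw [← h, ZMod.lift_coe]

noncomputable def β : T →+ L :=
  (zmultiplesHom L (gen 3 p4 0)).comp (AddMonoidHom.fst ℤ _) +
  (ZMod.lift 2 ⟨zmultiplesHom L (gen 3 p4 1 - gen 3 p4 0), by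
      show (2:ℤ) • (gen 3 p4 1 - gen 3 p4 0) = 0
      rw [zsmul_sub]; exact two_smul_gen 1⟩).comp
    ((AddMonoidHom.fst (ZMod 2) _).comp (AddMonoidHom.snd ℤ _)) +
  (ZMod.lift 2 ⟨zmultiplesHom L (gen 3 p4 2 - gen 3 p4 0), by
      show (2:ℤ) • (gen 3 p4 2 - gen 3 p4 0) = 0
      rw [zsmul_sub]; exact two_smul_gen 2⟩).comp
    ((AddMonoidHom.fst (ZMod 2) _).comp ((AddMonoidHom.snd (ZMod 2) _).comp (AddMonoidHom.snd ℤ _))) +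
  (ZMod.lift 2 ⟨zmultiplesHom L (gen 3 p4 3 - gen 3 p4 0), by
      show (2:ℤ) • (gen 3 p4 3 - gen 3 p4 0) = 0
      rw [zsmul_sub]; exact two_smul_gen 3⟩).comp
    ((AddMonoidHom.snd (ZMod 2) _).comp ((AddMonoidHom.snd (ZMod 2) _).comp (AddMonoidHom.snd ℤ _)))

lemma β_apply_v (i : Fin 4) : β (v i) = gen 3 p4 i := by
  fin_cases i
  · show β (1,0,0,0) = gen 3 p4 0
    simp only [β, AddMonoidHom.add_apply, AddMonoidHom.comp_apply,
      AddMonoidHom.coe_fst, AddMonoidHom.coe_snd, Prod.fst, Prod.snd, lift_one,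
      zmultiplesHom_apply, map_zero, one_smul, add_zero, zero_add]
  · show β (1,1,0,0) = gen 3 p4 1
    simp only [β, AddMonoidHom.add_apply, AddMonoidHom.comp_apply,
      AddMonoidHom.coe_fst, AddMonoidHom.coe_snd, Prod.fst, Prod.snd, lift_one,
      zmultiplesHom_apply, map_zero, one_smul, add_zero, zero_add]
    abel
  · show β (1,0,1,0) = gen 3 p4 2
    simp only [β, AddMonoidHom.add_apply, AddMonoidHom.comp_apply,
      AddMonoidHom.coe_fst, AddMonoidHom.coe_snd, Prod.fst, Prod.snd, lift_one,
      zmultiplesHom_apply, map_zero, one_smul, add_zero, zero_add]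
    abel
  · show β (1,0,0,1) = gen 3 p4 3
    simp only [β, AddMonoidHom.add_apply, AddMonoidHom.comp_apply,
      AddMonoidHom.coe_fst, AddMonoidHom.coe_snd, Prod.fst, Prod.snd, lift_one,
      zmultiplesHom_apply, map_zero, one_smul, add_zero, zero_add]
    abel

lemma βα (q : L) : β (αbar q) = q := by
  have h : β.comp αbar = AddMonoidHom.id L := by
    refine QuotientAddGroup.addMonoidHom_ext _ (Finsupp.addHom_ext fun i n => ?_)
    have h1 : (Finsupp.single i n : F) = n • Finsupp.single i 1 := by
      simp [Finsupp.smul_single]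
    rw [h1]
    show β (αbar (mkL _)) = mkL _
    rw [map_zsmul, map_zsmul, map_zsmul, αbar_mk, α_single]
    rw [show (1:ℤ) • v i = v i from one_smul _ _, β_apply_v]
    rfl
  exact DFunLike.congr_fun h q

lemma αbar_inj : Function.Injective αbar := Function.LeftInverse.injective βα
lemma two_smul_eq (i : Fin 4) :
    (2:ℤ) • mkL (Finsupp.single i 1) = (2:ℤ) • mkL (Finsupp.single 0 1) :=
  sub_eq_zero.mp (two_smul_gen i)

lemma φ_rel (i : Fin 4) : mkL (φ (Finsupp.single i 2 - Finsupp.single 0 2)) = 0 := by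
  rw [map_sub, φ_single, φ_single, map_sub, map_zsmul, map_zsmul]
  fin_cases i
  · show (2:ℤ) • mkL (Finsupp.single 0 1 + Finsupp.single 2 1)
      - (2:ℤ) • mkL (Finsupp.single 0 1 + Finsupp.single 2 1) = 0
    exact sub_self _
  · show (2:ℤ) • mkL (Finsupp.single 1 1 + Finsupp.single 3 1)
      - (2:ℤ) • mkL (Finsupp.single 0 1 + Finsupp.single 2 1) = 0
    rw [map_add, map_add, zsmul_add, zsmul_add, two_smul_eq 1, two_smul_eq 2,
      two_smul_eq 3]
    abel
  · show (2:ℤ) • mkL (Finsupp.single 0 2)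
      - (2:ℤ) • mkL (Finsupp.single 0 1 + Finsupp.single 2 1) = 0
    rw [map_add, zsmul_add, two_smul_eq 2,
      show (Finsupp.single 0 2 : F) = (2:ℤ) • Finsupp.single 0 1 by
        simp [Finsupp.smul_single], map_zsmul]
    abel
  · show (2:ℤ) • mkL (Finsupp.single 0 2)
      - (2:ℤ) • mkL (Finsupp.single 0 1 + Finsupp.single 2 1) = 0
    rw [map_add, zsmul_add, two_smul_eq 2,
      show (Finsupp.single 0 2 : F) = (2:ℤ) • Finsupp.single 0 1 by
        simp [Finsupp.smul_single], map_zsmul]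
    abel

lemma hφ : R ≤ (mkL.comp φ).ker := by
  show stringRels 3 p4 ≤ _
  unfold stringRels
  rw [AddSubgroup.closure_le]
  rintro _ ⟨i, rfl⟩
  have hp : ∀ j : Fin 4, (p4 j : ℤ) = 2 := by decide
  show mkL (φ ((fun₀ | i => ((p4 i : ℤ))) - fun₀ | 0 => ((p4 0 : ℤ)))) = 0
  rw [hp i, hp 0]
  exact φ_rel i

noncomputable def π : L →+ L := QuotientAddGroup.lift R (mkL.comp φ) hφ

lemma π_gen (i : Fin 4) : π (gen 3 p4 i) = mkL (w i) := by
  show mkL (φ (Finsupp.single i 1)) = _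
  rw [φ_single, one_smul]

lemma can_eq : can 3 p4 = mkL (Finsupp.single 0 2) := by
  show (p4 0 : ℤ) • gen 3 p4 0 = _
  rw [show ((p4 0 : ℤ)) = 2 by decide, gen_eq, ← map_zsmul]
  congr 1
  simp [Finsupp.smul_single]

lemma π_gen0 : π (gen 3 p4 0) = gen 3 p4 0 + gen 3 p4 2 := by
  rw [π_gen, show w 0 = Finsupp.single 0 1 + Finsupp.single 2 1 from rfl, map_add]
  rfl

lemma π_gen1 : π (gen 3 p4 1) = gen 3 p4 1 + gen 3 p4 3 := by
  rw [π_gen, show w 1 = Finsupp.single 1 1 + Finsupp.single 3 1 from rfl, map_add]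
  rfl

lemma π_gen2 : π (gen 3 p4 2) = can 3 p4 := by
  rw [π_gen, can_eq]; rfl

lemma π_gen3 : π (gen 3 p4 3) = can 3 p4 := by
  rw [π_gen, can_eq]; rfl

def piT : T →+ T :=
  AddMonoidHom.mk'
    (fun x => (2 * x.1, x.2.1, (x.1 : ZMod 2) + x.2.1 + x.2.2.1 + x.2.2.2, x.2.1))
    (by
      intro a b
      refine Prod.ext ?_ (Prod.ext ?_ (Prod.ext ?_ ?_)) <;> simp <;> push_cast <;> ring)

lemma comm : αbar.comp π = piT.comp αbar := by
  refine QuotientAddGroup.addMonoidHom_ext _ (Finsupp.addHom_ext fun i n => ?_)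
  have h1 : (Finsupp.single i n : F) = n • Finsupp.single i 1 := by
    simp [Finsupp.smul_single]
  rw [h1]
  show αbar (π (mkL _)) = piT (αbar (mkL _))
  rw [map_zsmul, map_zsmul, map_zsmul, map_zsmul, map_zsmul]
  congr 1
  show αbar (π (gen 3 p4 i)) = piT (α (Finsupp.single i 1))
  rw [π_gen, α_single, one_smul]
  fin_cases i
  · show α (Finsupp.single 0 1 + Finsupp.single 2 1) = piT (v 0)
    rw [map_add, α_single, α_single]; decide
  · show α (Finsupp.single 1 1 + Finsupp.single 3 1) = piT (v 1)
    rw [map_add, α_single, α_single]; decide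
  · show α (Finsupp.single 0 2) = piT (v 2)
    rw [α_single]; decide
  · show α (Finsupp.single 0 2) = piT (v 3)
    rw [α_single]; decide

lemma kerT (x : T) : piT x = 0 ↔ ∃ k : ℤ, k • ((0,0,1,1) : T) = x := by
  obtain ⟨n, a, b, c⟩ := x
  constructor
  · intro h
    have h1 : 2 * n = 0 ∧ a = 0 ∧ ((n : ZMod 2) + a + b + c = 0) ∧ a = 0 := by
      simpa [piT, Prod.ext_iff] using h
    obtain ⟨hn, ha, hbc, -⟩ := h1
    have hn0 : n = 0 := by omega
    subst hn0; subst ha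
    have hbc' : b + c = 0 := by simpa using hbc
    have hc : c = b := by
      have h2 : ∀ x y : ZMod 2, x + y = 0 → y = x := by decide
      exact h2 b c hbc'
    subst hc
    have hb : c = 0 ∨ c = 1 := by
      have : ∀ x : ZMod 2, x = 0 ∨ x = 1 := by decide
      exact this c
    rcases hb with rfl | rfl
    · exact ⟨0, by decide⟩
    · exact ⟨1, by decide⟩
  · rintro ⟨k, hk⟩
    rw [← hk, map_zsmul, show piT ((0,0,1,1) : T) = 0 by decide, smul_zero]

lemma t_eq : αbar (gen 3 p4 2 - gen 3 p4 3) = ((0,0,1,1) : T) := by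
  rw [map_sub, gen_eq, gen_eq, αbar_mk, αbar_mk, α_single, α_single]
  decide

lemma ker_eq : π.ker = AddSubgroup.zmultiples (gen 3 p4 2 - gen 3 p4 3) := by
  ext q
  simp only [AddMonoidHom.mem_ker, AddSubgroup.mem_zmultiples_iff]
  constructor
  · intro h
    have h2 : piT (αbar q) = 0 := by
      have hc := DFunLike.congr_fun comm q
      simp only [AddMonoidHom.comp_apply] at hc
      rw [← hc, h, map_zero]
    obtain ⟨k, hk⟩ := (kerT _).mp h2
    refine ⟨k, αbar_inj ?_⟩
    rw [map_zsmul, t_eq, hk]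
  · rintro ⟨k, rfl⟩
    rw [map_zsmul, map_sub, π_gen2, π_gen3, sub_self, smul_zero]

lemma order_eq : addOrderOf (gen 3 p4 2 - gen 3 p4 3) = 2 := by
  have hne : gen 3 p4 2 - gen 3 p4 3 ≠ 0 := by
    intro h
    have := t_eq
    rw [h, map_zero] at this
    exact absurd this (by decide)
  have h2 : (2:ℕ) • (gen 3 p4 2 - gen 3 p4 3) = 0 := by
    have key : (2:ℕ) • (gen 3 p4 2 - gen 3 p4 3)
        = ((2:ℤ) • gen 3 p4 2 - (2:ℤ) • gen 3 p4 0)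
          - ((2:ℤ) • gen 3 p4 3 - (2:ℤ) • gen 3 p4 0) := by abel
    rw [key, two_smul_gen 2, two_smul_gen 3, sub_self]
  exact addOrderOf_eq_prime h2 hne

end Stmt17

theorem stmt_17 :
    ∃ π : StringGroup 3 ![2, 2, 2, 2] →+ StringGroup 3 ![2, 2, 2, 2],
      π (gen 3 ![2, 2, 2, 2] 0) = gen 3 ![2, 2, 2, 2] 0 + gen 3 ![2, 2, 2, 2] 2 ∧
      π (gen 3 ![2, 2, 2, 2] 1) = gen 3 ![2, 2, 2, 2] 1 + gen 3 ![2, 2, 2, 2] 3 ∧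
      π (gen 3 ![2, 2, 2, 2] 2) = can 3 ![2, 2, 2, 2] ∧
      π (gen 3 ![2, 2, 2, 2] 3) = can 3 ![2, 2, 2, 2] ∧
      π.ker = AddSubgroup.zmultiples
        (gen 3 ![2, 2, 2, 2] 2 - gen 3 ![2, 2, 2, 2] 3) ∧
      addOrderOf (gen 3 ![2, 2, 2, 2] 2 - gen 3 ![2, 2, 2, 2] 3) = 2 := by
  exact ⟨Stmt17.π, Stmt17.π_gen0, Stmt17.π_gen1, Stmt17.π_gen2, Stmt17.π_gen3,
    Stmt17.ker_eq, Stmt17.order_eq⟩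
end

section
/- In the string group L(p1,...,pt) with relations pi·xi = c, the dualizing element ω = (t-2)·c - Σ xi is a torsion element if and only if Σ_{i=1}^t 1/pi = t - 2 (as rational numbers). -/
noncomputable def strPhi (t : ℕ) (p : Fin (t + 1) → ℕ) : (Fin (t + 1) →₀ ℤ) →+ ℚ :=
  Finsupp.liftAddHom (fun i => zmultiplesHom ℚ ((p i : ℚ))⁻¹)

lemma strPhi_single (t : ℕ) (p : Fin (t + 1) → ℕ) (i : Fin (t + 1)) (n : ℤ) :
    strPhi t p (Finsupp.single i n) = n * ((p i : ℚ))⁻¹ := by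
  simp [strPhi, zmultiplesHom, zsmul_eq_mul]

lemma strPhi_rels (t : ℕ) (p : Fin (t + 1) → ℕ) (hp : ∀ i, 2 ≤ p i) :
    ∀ g ∈ stringRels t p, strPhi t p g = 0 := by
  have h : stringRels t p ≤ (strPhi t p).ker := by
    rw [stringRels, AddSubgroup.closure_le]
    rintro _ ⟨i, rfl⟩
    have hi : (p i : ℚ) ≠ 0 := by
      have := hp i; positivity
    have h0 : (p 0 : ℚ) ≠ 0 := by
      have := hp 0; positivity
    simp [AddMonoidHom.mem_ker, strPhi_single, hi, h0]
  exact fun g hg => h hg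

noncomputable def strPsi (t : ℕ) (p : Fin (t + 1) → ℕ) (hp : ∀ i, 2 ≤ p i) :
    StringGroup t p →+ ℚ :=
  QuotientAddGroup.lift (stringRels t p) (strPhi t p) (strPhi_rels t p hp)

lemma strPsi_gen (t : ℕ) (p : Fin (t + 1) → ℕ) (hp : ∀ i, 2 ≤ p i) (i : Fin (t + 1)) :
    strPsi t p hp (gen t p i) = ((p i : ℚ))⁻¹ := by
  show strPhi t p (Finsupp.single i 1) = _
  simp [strPhi_single]

lemma can_eq (t : ℕ) (p : Fin (t + 1) → ℕ) (i : Fin (t + 1)) :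
    (p i : ℤ) • gen t p i = can t p := by
  rw [can]
  have : (p i : ℤ) • gen t p i - (p 0 : ℤ) • gen t p 0 = 0 := by
    show ((p i : ℤ) • (QuotientAddGroup.mk (Finsupp.single i 1) : StringGroup t p))
        - (p 0 : ℤ) • QuotientAddGroup.mk (Finsupp.single 0 1) = 0
    rw [← QuotientAddGroup.mk_zsmul, ← QuotientAddGroup.mk_zsmul, ← QuotientAddGroup.mk_sub,
      QuotientAddGroup.eq_zero_iff]
    have : (p i : ℤ) • Finsupp.single i (1:ℤ) - (p 0 : ℤ) • Finsupp.single 0 (1:ℤ)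
        = Finsupp.single i (p i : ℤ) - Finsupp.single 0 (p 0 : ℤ) := by
      simp [Finsupp.smul_single]
    rw [this]
    exact AddSubgroup.subset_closure ⟨i, rfl⟩
  linear_combination (norm := abel) this

theorem stmt_19 (t : ℕ) (p : Fin (t + 1) → ℕ) (hp : ∀ i, 2 ≤ p i) :
    IsOfFinAddOrder
      (((t : ℤ) + 1 - 2) • can t p - ∑ i, gen t p i) ↔
      ∑ i, ((p i : ℚ))⁻¹ = ((t : ℚ) + 1) - 2 := by
  have hpne : ∀ i, (p i : ℚ) ≠ 0 := fun i => by have := hp i; positivity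
  constructor
  · intro hω
    set ω := ((t : ℤ) + 1 - 2) • can t p - ∑ i, gen t p i with hωdef
    obtain ⟨n, hn, hnω⟩ := isOfFinAddOrder_iff_nsmul_eq_zero.mp hω
    have hmap : n • strPsi t p hp ω = 0 := by
      rw [← map_nsmul, hnω, map_zero]
    have hψω : strPsi t p hp ω = 0 := by
      have := hmap
      rw [nsmul_eq_mul] at this
      have hn' : (n : ℚ) ≠ 0 := Nat.cast_ne_zero.mpr hn.ne'
      exact (mul_eq_zero.mp this).resolve_left hn'
    have hcan : strPsi t p hp (can t p) = 1 := by
      rw [can, map_zsmul, strPsi_gen]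
      simp [hpne 0]
    rw [hωdef, map_sub, map_zsmul, hcan, map_sum] at hψω
    simp only [strPsi_gen] at hψω
    simp only [zsmul_eq_mul] at hψω
    push_cast at hψω
    linarith [hψω]
  · intro hsum
    set P : ℕ := ∏ i, p i with hPdef
    have hPpos : 0 < P := Finset.prod_pos fun i _ => lt_of_lt_of_le two_pos (hp i)
    have hdvd : ∀ i, p i ∣ P := fun i => Finset.dvd_prod_of_mem p (Finset.mem_univ i)
    set m : Fin (t + 1) → ℕ := fun i => P / p i with hmdef
    have hm : ∀ i, m i * p i = P := fun i => Nat.div_mul_cancel (hdvd i)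
    have hmQ : ∀ i, (m i : ℚ) = P * ((p i : ℚ))⁻¹ := by
      intro i
      rw [inv_eq_one_div, mul_one_div, eq_div_iff (hpne i)]
      exact_mod_cast hm i
    have hkey : (∑ i, (m i : ℤ)) = ((t : ℤ) + 1 - 2) * P := by
      have : (∑ i, (m i : ℚ)) = ((t : ℚ) + 1 - 2) * P := by
        simp only [hmQ]
        rw [← Finset.mul_sum, hsum]
        ring
      exact_mod_cast this
    rw [isOfFinAddOrder_iff_nsmul_eq_zero]
    refine ⟨P, hPpos, ?_⟩
    have hPgen : ∀ i, (P : ℤ) • gen t p i = (m i : ℤ) • can t p := by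
      intro i
      rw [← can_eq t p i, smul_smul]
      congr 1
      exact_mod_cast (hm i).symm
    rw [← natCast_zsmul, zsmul_sub, Finset.smul_sum]
    simp only [hPgen]
    rw [← Finset.sum_smul, smul_smul, sub_eq_zero]
    congr 1
    rw [hkey]
    ring
end
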